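/- (Atkinson normal form, necessity.) Let E ⊆ Matrix(b,c,ℂ) be a linear subspace in which every matrix has rank at most r, and suppose E contains the matrix X₁ whose upper-left r×r block is the identity and all other entries are 0. Then every X ∈ E, written in block form X = [[x, W],[U, Z]] with respect to the blocking (r, b−r) × (r, c−r), satisfies Z = 0 and U·x^k·W = 0 for all k ≥ 0. -/

import Mathlib

open Matrix Polynomial

/-- If a block matrix with invertible top-left `r×r` block has rank at most `r`,
then its Schur complement vanishes. -/
lemma schur_zero {r p q : ℕ} (A : Matrix (Fin r) (Fin r) ℂ) (B : Matrix (Fin r) (Fin q) ℂ)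
    (C : Matrix (Fin p) (Fin r) ℂ) (D : Matrix (Fin p) (Fin q) ℂ)
    (hA : IsUnit A.det) (h : (Matrix.fromBlocks A B C D).rank ≤ r) :
    D - C * A⁻¹ * B = 0 := by
  haveI := A.invertibleOfIsUnitDet hA
  set S := D - C * A⁻¹ * B with hS
  have hS' : D - C * ⅟A * B = S := by rw [invOf_eq_nonsing_inv]
  have hfac := Matrix.fromBlocks_eq_of_invertible₁₁ A B C D
  rw [hS'] at hfac
  have hrankS : (Matrix.fromBlocks A 0 0 S).rank ≤ r := by
    have h1 : IsUnit (Matrix.fromBlocks (1 : Matrix (Fin r) (Fin r) ℂ) (⅟A * B) 0 1).det := by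
      rw [Matrix.det_fromBlocks_zero₂₁]; simp
    have h2 : IsUnit (Matrix.fromBlocks (1 : Matrix (Fin r) (Fin r) ℂ) 0 (C * ⅟A) 1).det := by
      rw [Matrix.det_fromBlocks_zero₁₂]; simp
    calc (Matrix.fromBlocks A 0 0 S).rank
        = (((Matrix.fromBlocks 1 0 (C * ⅟A) 1 : Matrix (Fin r ⊕ Fin p) (Fin r ⊕ Fin p) ℂ) * Matrix.fromBlocks A 0 0 S) *
            (Matrix.fromBlocks 1 (⅟A * B) 0 1 : Matrix (Fin r ⊕ Fin q) (Fin r ⊕ Fin q) ℂ) : Matrix (Fin r ⊕ Fin p) (Fin r ⊕ Fin q) ℂ).rank := by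
          rw [Matrix.rank_mul_eq_left_of_isUnit_det _ _ h1,
            Matrix.rank_mul_eq_right_of_isUnit_det _ _ h2]
      _ ≤ r := by rw [Matrix.mul_assoc] at hfac ⊢; rw [← hfac]; exact h
  ext i j
  rw [Matrix.zero_apply]
  by_contra hij
  set Pk : Matrix (Fin 1) (Fin p) ℂ := Matrix.of fun _ k => if k = i then (1:ℂ) else 0 with hPk
  set Qk : Matrix (Fin q) (Fin 1) ℂ := Matrix.of fun k _ => if k = j then (1:ℂ) else 0 with hQk
  set P : Matrix (Fin r ⊕ Fin 1) (Fin r ⊕ Fin p) ℂ := Matrix.fromBlocks 1 0 0 Pk with hP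
  set Q : Matrix (Fin r ⊕ Fin q) (Fin r ⊕ Fin 1) ℂ := Matrix.fromBlocks A⁻¹ 0 0 Qk with hQ
  have h1 : Matrix.fromBlocks A 0 0 S * Q =
      (Matrix.fromBlocks 1 0 0 (S * Qk) : Matrix (Fin r ⊕ Fin p) (Fin r ⊕ Fin 1) ℂ) := by
    rw [hQ, Matrix.fromBlocks_multiply]
    simp [Matrix.mul_nonsing_inv A hA]
  have h2 : P * (Matrix.fromBlocks 1 0 0 (S * Qk) : Matrix (Fin r ⊕ Fin p) (Fin r ⊕ Fin 1) ℂ) =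
      (Matrix.fromBlocks 1 0 0 (Pk * (S * Qk)) : Matrix (Fin r ⊕ Fin 1) (Fin r ⊕ Fin 1) ℂ) := by
    rw [hP, Matrix.fromBlocks_multiply]
    simp
  have hent : Pk * (S * Qk) = ((Matrix.of fun _ _ => S i j) : Matrix (Fin 1) (Fin 1) ℂ) := by
    ext a b
    simp [hPk, hQk, Matrix.mul_apply, ite_mul, mul_ite, Finset.sum_ite_eq, Finset.sum_ite_eq',
      mul_one, mul_zero, one_mul, zero_mul]
  have hPMQ : P * Matrix.fromBlocks A 0 0 S * Q =
      Matrix.fromBlocks 1 0 0 ((Matrix.of fun _ _ => S i j) : Matrix (Fin 1) (Fin 1) ℂ) := by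
    rw [Matrix.mul_assoc, h1, h2, hent]
  have hdet : IsUnit (Matrix.fromBlocks (1 : Matrix (Fin r) (Fin r) ℂ) 0 0
      ((Matrix.of fun _ _ => S i j) : Matrix (Fin 1) (Fin 1) ℂ)).det := by
    rw [Matrix.det_fromBlocks_zero₂₁]
    simp [Matrix.det_fin_one, hij]
  have hge : (P * Matrix.fromBlocks A 0 0 S * Q).rank = r + 1 := by
    rw [hPMQ, Matrix.rank_of_isUnit _ ((Matrix.isUnit_iff_isUnit_det _).mpr hdet)]
    simp
  have hle : (P * Matrix.fromBlocks A 0 0 S * Q).rank ≤ r :=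
    le_trans (Matrix.rank_mul_le_left _ _) (le_trans (Matrix.rank_mul_le_right _ _) hrankS)
  rw [hge] at hle
  omega

/-- Mapping entrywise by `Polynomial.C` and then evaluating recovers the matrix. -/
lemma mapC_eval {m n : ℕ} (M : Matrix (Fin m) (Fin n) ℂ) (s : ℂ) :
    (M.map Polynomial.C).map (Polynomial.evalRingHom s) = M := by
  ext i j; simp [Matrix.map_apply]

/-- Mapping entrywise by `Polynomial.C` and coercing to power series is mapping by
`PowerSeries.C`. -/
lemma mapC_ps {m n : ℕ} (M : Matrix (Fin m) (Fin n) ℂ) :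
    (M.map Polynomial.C).map (Polynomial.coeToPowerSeries.ringHom : ℂ[X] →+* PowerSeries ℂ)
      = M.map (PowerSeries.C : ℂ →+* PowerSeries ℂ) := by
  ext i j
  simp [Matrix.map_apply, Polynomial.coeToPowerSeries.ringHom_apply, Polynomial.coe_C]

/-- If the constant matrix `A` (viewed over `ℂ⟦X⟧`) equals `X • B`, then both vanish. -/
lemma ps_extract {m n : ℕ} (A : Matrix (Fin m) (Fin n) ℂ)
    (B : Matrix (Fin m) (Fin n) (PowerSeries ℂ))
    (h : A.map (PowerSeries.C : ℂ →+* PowerSeries ℂ) = (PowerSeries.X : PowerSeries ℂ) • B) : A = 0 ∧ B = 0 := by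
  have hA : A = 0 := by
    refine Matrix.ext fun i j => ?_
    have := congrArg (fun M => PowerSeries.constantCoeff (M i j)) h
    simpa [Matrix.map_apply, Matrix.smul_apply, smul_eq_mul, _root_.map_mul] using this
  refine ⟨hA, ?_⟩
  refine Matrix.ext fun i j => ?_
  have := congrArg (fun M => M i j) h
  rw [hA] at this
  simp only [Matrix.map_apply, Matrix.zero_apply, map_zero, Matrix.smul_apply,
    smul_eq_mul] at this
  rcases mul_eq_zero.mp this.symm with h' | h'
  · exact absurd h' PowerSeries.X_ne_zero
  · simpa [Matrix.zero_apply] using h'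

set_option maxHeartbeats 1000000 in
theorem stmt8 (r p q : ℕ)
    (E : Submodule ℂ (Matrix (Fin r ⊕ Fin p) (Fin r ⊕ Fin q) ℂ))
    (hrank : ∀ X ∈ E, X.rank ≤ r)
    (hX1 : Matrix.fromBlocks (1 : Matrix (Fin r) (Fin r) ℂ) 0 0 0 ∈ E) :
    ∀ X ∈ E, ∀ (x : Matrix (Fin r) (Fin r) ℂ) (W : Matrix (Fin r) (Fin q) ℂ)
      (U : Matrix (Fin p) (Fin r) ℂ) (Z : Matrix (Fin p) (Fin q) ℂ),
      X = Matrix.fromBlocks x W U Z →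
      Z = 0 ∧ ∀ k : ℕ, U * x ^ k * W = 0 := by
  intro X hX x W U Z hXeq
  -- the pointwise Schur identity
  have hpt : ∀ s : ℂ, s ≠ 0 → IsUnit (1 + s • x).det →
      Z = s • (U * (1 + s • x)⁻¹ * W) := by
    intro s hs hdets
    have hmem : Matrix.fromBlocks (1 + s • x) (s • W) (s • U) (s • Z) ∈ E := by
      have h' := E.add_mem hX1 (E.smul_mem s hX)
      rw [hXeq, Matrix.fromBlocks_smul, Matrix.fromBlocks_add] at h'
      simpa using h'
    have h0 := schur_zero (1 + s • x) (s • W) (s • U) (s • Z) hdets (hrank _ hmem)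
    have h1 : s • Z = (s * s) • (U * (1 + s • x)⁻¹ * W) := by
      have h0' := sub_eq_zero.mp h0
      rw [Matrix.smul_mul, Matrix.smul_mul, Matrix.mul_smul, smul_smul] at h0'
      rw [h0', Matrix.mul_assoc]
    calc Z = s⁻¹ • (s • Z) := (inv_smul_smul₀ hs Z).symm
      _ = s⁻¹ • ((s * s) • (U * (1 + s • x)⁻¹ * W)) := by rw [h1]
      _ = s • (U * (1 + s • x)⁻¹ * W) := by
          rw [smul_smul]
          congr 1
          field_simp
  -- the polynomial matrix `N`
  set N : Matrix (Fin r) (Fin r) ℂ[X] := 1 + (Polynomial.X : ℂ[X]) • x.map Polynomial.C with hN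
  have hmapN : ∀ s : ℂ, N.map (Polynomial.evalRingHom s) = 1 + s • x := by
    intro s
    ext i j
    simp only [hN, Matrix.map_apply, Matrix.add_apply, Matrix.smul_apply, smul_eq_mul,
      map_add, _root_.map_mul, coe_evalRingHom, eval_X, eval_C, Matrix.one_apply,
      apply_ite (Polynomial.eval s), eval_one, eval_zero]
    split_ifs <;> simp <;> ring
  have hdet0 : (N.det).eval 0 = 1 := by
    have h1 : (Polynomial.evalRingHom (0:ℂ)) N.det = (N.map (Polynomial.evalRingHom 0)).det :=
      RingHom.map_det _ N
    rw [hmapN 0] at h1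
    simpa using h1
  have hdne : N.det ≠ 0 := by
    intro h
    rw [h] at hdet0
    simp at hdet0
  -- the set of good parameters is infinite
  set G : Set ℂ := {s : ℂ | s ≠ 0 ∧ IsUnit (1 + s • x).det} with hG
  have hGinf : G.Infinite := by
    have hsub : ({0} ∪ {s | N.det.IsRoot s} : Set ℂ)ᶜ ⊆ G := by
      intro s hsG
      simp only [Set.mem_compl_iff, Set.mem_union, Set.mem_singleton_iff, Set.mem_setOf_eq,
        not_or] at hsG
      refine ⟨hsG.1, ?_⟩
      have h1 : (Polynomial.evalRingHom s) N.det = (N.map (Polynomial.evalRingHom s)).det :=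
        RingHom.map_det _ N
      rw [hmapN s] at h1
      have : N.det.eval s ≠ 0 := hsG.2
      rw [isUnit_iff_ne_zero]
      intro h'
      exact this (by rw [show N.det.eval s = (Polynomial.evalRingHom s) N.det from rfl, h1, h'])
    have hfin : ({0} ∪ {s | N.det.IsRoot s} : Set ℂ).Finite :=
      (Set.finite_singleton 0).union (Polynomial.finite_setOf_isRoot hdne)
    exact (Set.Finite.infinite_compl hfin).mono hsub
  -- evaluation of the big polynomial matrix
  have hmapsR : ∀ s : ℂ,
      (U.map Polynomial.C * N.adjugate * W.map Polynomial.C).map (Polynomial.evalRingHom s)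
        = U * (1 + s • x).adjugate * W := by
    intro s
    have hadj : N.adjugate.map (Polynomial.evalRingHom s) = (1 + s • x).adjugate := by
      have := RingHom.map_adjugate (Polynomial.evalRingHom s) N
      rw [RingHom.mapMatrix_apply, RingHom.mapMatrix_apply, hmapN s] at this
      exact this
    rw [Matrix.map_mul, Matrix.map_mul, hadj, mapC_eval, mapC_eval]
  -- the polynomial identity
  have hpoly : N.det • Z.map Polynomial.C =
      (Polynomial.X : ℂ[X]) • (U.map Polynomial.C * N.adjugate * W.map Polynomial.C) := by
    refine Matrix.ext fun i j => ?_
    rw [← sub_eq_zero]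
    apply Polynomial.eq_zero_of_infinite_isRoot
    apply hGinf.mono
    intro s hsG
    obtain ⟨hs0, hdets⟩ := hsG
    have hd := isUnit_iff_ne_zero.mp hdets
    simp only [Set.mem_setOf_eq, Polynomial.IsRoot, Polynomial.eval_sub]
    have hevL : ((N.det • Z.map Polynomial.C) i j).eval s = (1 + s • x).det * Z i j := by
      have h1 : (Polynomial.evalRingHom s) N.det = (N.map (Polynomial.evalRingHom s)).det :=
        RingHom.map_det _ N
      rw [hmapN s] at h1
      simp only [Matrix.smul_apply, Matrix.map_apply, smul_eq_mul, Polynomial.eval_mul,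
        Polynomial.eval_C]
      rw [show N.det.eval s = (Polynomial.evalRingHom s) N.det from rfl, h1]
    have hevR : (((Polynomial.X : ℂ[X]) •
        (U.map Polynomial.C * N.adjugate * W.map Polynomial.C)) i j).eval s
        = s * (U * (1 + s • x).adjugate * W) i j := by
      simp only [Matrix.smul_apply, smul_eq_mul, Polynomial.eval_mul, Polynomial.eval_X]
      congr 1
      rw [show ((U.map Polynomial.C * N.adjugate * W.map Polynomial.C) i j).eval s =
        ((U.map Polynomial.C * N.adjugate * W.map Polynomial.C).map
          (Polynomial.evalRingHom s)) i j from rfl, hmapsR s]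
    rw [hevL, hevR, sub_eq_zero]
    -- now use the pointwise identity
    have hid := hpt s hs0 hdets
    have hinv : (1 + s • x)⁻¹ = ((1 + s • x).det)⁻¹ • (1 + s • x).adjugate := by
      rw [Matrix.inv_def, Ring.inverse_eq_inv']
    rw [hinv, Matrix.mul_smul, Matrix.smul_mul, smul_smul] at hid
    have := congrArg (fun M => (1 + s • x).det * M i j) hid
    simp only [Matrix.smul_apply, smul_eq_mul] at this
    rw [this]
    field_simp
  -- move to power series
  set ψ : ℂ[X] →+* PowerSeries ℂ := Polynomial.coeToPowerSeries.ringHom with hψ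
  set ρ : ℂ →+* PowerSeries ℂ := PowerSeries.C with hρ
  set N' : Matrix (Fin r) (Fin r) (PowerSeries ℂ) := N.map ψ with hN'
  have hpoly' : N'.det • Z.map ρ =
      (PowerSeries.X : PowerSeries ℂ) • (U.map ρ * N'.adjugate * W.map ρ) := by
    have hmm := congrArg (fun M => M.map ψ) hpoly
    have hL : (N.det • Z.map Polynomial.C).map ψ = N'.det • Z.map ρ := by
      have hdet : ψ N.det = N'.det := by
        rw [hN', ← RingHom.mapMatrix_apply, RingHom.map_det]
      refine Matrix.ext fun i j => ?_
      simp only [Matrix.map_apply, Matrix.smul_apply, smul_eq_mul, _root_.map_mul, hdet]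
      congr 1
      rw [hψ, hρ, Polynomial.coeToPowerSeries.ringHom_apply, Polynomial.coe_C]
    have hR : ((Polynomial.X : ℂ[X]) • (U.map Polynomial.C * N.adjugate * W.map Polynomial.C)).map ψ
        = (PowerSeries.X : PowerSeries ℂ) • (U.map ρ * N'.adjugate * W.map ρ) := by
      have hadj : N.adjugate.map ψ = N'.adjugate := by
        have := RingHom.map_adjugate ψ N
        rw [RingHom.mapMatrix_apply, RingHom.mapMatrix_apply] at this
        rw [hN', this]
      have hprod : (U.map Polynomial.C * N.adjugate * W.map Polynomial.C).map ψ
          = U.map ρ * N'.adjugate * W.map ρ := by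
        rw [Matrix.map_mul, Matrix.map_mul, hadj, hρ, ← mapC_ps U, ← mapC_ps W, hψ]
      refine Matrix.ext fun i j => ?_
      simp only [Matrix.map_apply, Matrix.smul_apply, smul_eq_mul, _root_.map_mul]
      rw [show ψ Polynomial.X = PowerSeries.X by
        rw [hψ, Polynomial.coeToPowerSeries.ringHom_apply, Polynomial.coe_X]]
      congr 1
      rw [← hprod, Matrix.map_apply]
    rw [hL, hR] at hmm
    exact hmm
  -- N' is invertible
  have hdet' : IsUnit N'.det := by
    rw [PowerSeries.isUnit_iff_constantCoeff]
    have h1 : N'.det = ψ N.det := by rw [hN', ← RingHom.mapMatrix_apply, RingHom.map_det]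
    rw [h1, hψ, Polynomial.coeToPowerSeries.ringHom_apply]
    have : PowerSeries.constantCoeff (N.det : PowerSeries ℂ) = N.det.coeff 0 := by
      rw [← PowerSeries.coeff_zero_eq_constantCoeff, Polynomial.coeff_coe]
    rw [this, Polynomial.coeff_zero_eq_eval_zero, hdet0]
    exact isUnit_one
  have hdne' : N'.det ≠ 0 := hdet'.ne_zero
  set H : Matrix (Fin r) (Fin r) (PowerSeries ℂ) := N'⁻¹ with hH
  have hNH : N' * H = 1 := Matrix.mul_nonsing_inv _ hdet'
  have hadjH : N'.adjugate = N'.det • H := by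
    rw [hH, Matrix.inv_def, smul_smul, Ring.mul_inverse_cancel _ hdet', one_smul]
  -- the power series identity with the inverse
  have hps : Z.map ρ = (PowerSeries.X : PowerSeries ℂ) • (U.map ρ * H * W.map ρ) := by
    have h1 : N'.det • Z.map ρ = N'.det • ((PowerSeries.X : PowerSeries ℂ) • (U.map ρ * H * W.map ρ)) := by
      rw [hpoly', hadjH, Matrix.mul_smul, Matrix.smul_mul, smul_comm]
    refine Matrix.ext fun i j => ?_
    have := congrArg (fun M => M i j) h1
    simp only [Matrix.smul_apply, smul_eq_mul] at this
    exact mul_left_cancel₀ hdne' this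
  -- the recursion for H
  have hN'form : N' = 1 + (PowerSeries.X : PowerSeries ℂ) • x.map ρ := by
    refine Matrix.ext fun i j => ?_
    simp only [hN', hN, Matrix.map_apply, Matrix.add_apply, Matrix.smul_apply,
      Matrix.one_apply, smul_eq_mul, map_add, _root_.map_mul]
    rw [show ψ Polynomial.X = PowerSeries.X by
      rw [hψ, Polynomial.coeToPowerSeries.ringHom_apply, Polynomial.coe_X]]
    rw [show ψ (Polynomial.C (x i j)) = ρ (x i j) by
      rw [hψ, Polynomial.coeToPowerSeries.ringHom_apply, Polynomial.coe_C, hρ]]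
    split <;> simp
  have hHrec : H = 1 - (PowerSeries.X : PowerSeries ℂ) • (x.map ρ * H) := by
    have h1 := hNH
    rw [hN'form, add_mul, one_mul, Matrix.smul_mul] at h1
    exact eq_sub_of_add_eq h1
  -- the sequence F
  set F : ℕ → Matrix (Fin p) (Fin q) (PowerSeries ℂ) :=
    fun k => U.map ρ * (x.map ρ) ^ k * H * W.map ρ with hF
  have hmappow : ∀ k : ℕ, (x ^ k).map ρ = (x.map ρ) ^ k := by
    intro k
    rw [← RingHom.mapMatrix_apply, map_pow, RingHom.mapMatrix_apply]
  have hFrec : ∀ k : ℕ, F k = (U * x ^ k * W).map ρ - (PowerSeries.X : PowerSeries ℂ) • F (k + 1) := by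
    intro k
    show U.map ρ * (x.map ρ) ^ k * H * W.map ρ = _
    rw [Matrix.map_mul, Matrix.map_mul, hmappow k]
    calc U.map ρ * (x.map ρ) ^ k * H * W.map ρ
        = U.map ρ * (x.map ρ) ^ k * (1 - (PowerSeries.X : PowerSeries ℂ) • (x.map ρ * H)) * W.map ρ := by
          rw [← hHrec]
      _ = U.map ρ * (x.map ρ) ^ k * W.map ρ -
          (PowerSeries.X : PowerSeries ℂ) • (U.map ρ * (x.map ρ) ^ (k + 1) * H * W.map ρ) := by
          simp only [pow_succ, Matrix.mul_sub, Matrix.mul_one, Matrix.sub_mul,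
            Matrix.mul_smul, Matrix.smul_mul, Matrix.mul_assoc]
  -- base case
  have hF0eq : F 0 = U.map ρ * H * W.map ρ := by
    show U.map ρ * (x.map ρ) ^ 0 * H * W.map ρ = _
    rw [pow_zero, Matrix.mul_one]
  have hbase := ps_extract Z (F 0) (by rw [hps, hF0eq])
  obtain ⟨hZ0, hF0⟩ := hbase
  have hFzero : ∀ k : ℕ, F k = 0 ∧ U * x ^ k * W = 0 := by
    intro k
    induction k with
    | zero =>
      refine ⟨hF0, ?_⟩
      have h1 := hFrec 0
      rw [hF0] at h1
      have h2 : (U * x ^ 0 * W).map ρ = (PowerSeries.X : PowerSeries ℂ) • F 1 := by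
        exact sub_eq_zero.mp h1.symm
      exact (ps_extract _ _ h2).1
    | succ n ih =>
      have h1 := hFrec n
      rw [ih.1] at h1
      have h2 : (U * x ^ n * W).map ρ = (PowerSeries.X : PowerSeries ℂ) • F (n + 1) := by
        exact sub_eq_zero.mp h1.symm
      have h3 := ps_extract _ _ h2
      refine ⟨h3.2, ?_⟩
      have h4 := hFrec (n + 1)
      rw [h3.2] at h4
      have h5 : (U * x ^ (n + 1) * W).map ρ = (PowerSeries.X : PowerSeries ℂ) • F (n + 2) := by
        exact sub_eq_zero.mp h4.symm
      exact (ps_extract _ _ h5).1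
  exact ⟨hZ0, fun k => (hFzero k).2⟩
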